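/- Let G = (ℂ \ {0}) × ℂ with the product (t,s)(t',s') = (tt', s + ts'), and define i(g) = (g, 0) and j(s) = (s, s−1) for g, s ∈ ℂ \ {0}. Let g, s ∈ ℂ \ {0} satisfy g(s−1) + 1 ≠ 0, and set α = g(s−1) + 1 and β = sg/(g(s−1)+1). Then α ≠ 0, β ≠ 0, and j(α)·i(β) = i(g)·j(s) in G. -/

import Mathlib

/-- In `G = (ℂ \ {0}) × ℂ` with product `(t,s)(t',s') = (tt', s + ts')`, with
`i(g) = (g,0)` and `j(s) = (s, s−1)`: if `g(s−1) + 1 ≠ 0` then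
`α = g(s−1)+1` and `β = sg/(g(s−1)+1)` are nonzero and satisfy
`j(α)·i(β) = i(g)·j(s)`. -/
theorem complex_matched_pair_factorization
    (mul : ℂ × ℂ → ℂ × ℂ → ℂ × ℂ)
    (hmul : ∀ t s t' s' : ℂ, mul (t, s) (t', s') = (t * t', s + t * s'))
    (i j : ℂ → ℂ × ℂ)
    (hi : ∀ g : ℂ, i g = (g, 0)) (hj : ∀ s : ℂ, j s = (s, s - 1))
    (g s : ℂ) (hg : g ≠ 0) (hs : s ≠ 0) (h : g * (s - 1) + 1 ≠ 0)
    (α β : ℂ) (hα : α = g * (s - 1) + 1) (hβ : β = s * g / (g * (s - 1) + 1)) :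
    α ≠ 0 ∧ β ≠ 0 ∧ mul (j α) (i β) = mul (i g) (j s) := by
  subst hα hβ
  refine ⟨h, div_ne_zero (mul_ne_zero hs hg) h, ?_⟩
  rw [hi, hj, hi, hj, hmul, hmul]
  refine Prod.ext ?_ ?_
  · field_simp
  · simp
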